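/- (Clause splitting yields a single-test property.) Let M be a single-output combinational circuit with internal variables X, input variables V = {v₁, …, v_p}, and output variable w, specified by a CNF formula F over X ∪ V ∪ {w} (circuit conditions (i) and (ii)), computing the Boolean function f on full assignments to V. Let C ∈ F, choose a literal l(vᵢ) of each input variable vᵢ, and let F' be the formula obtained from F by replacing C with the p+1 clauses C ∨ ¬l(v₁), …, C ∨ ¬l(v_p) and C_{p+1} = C ∨ l(v₁) ∨ … ∨ l(v_p). Let v_spl be the unique full assignment to V falsifying every literal l(vᵢ), and let B be the clause over V ∪ {w} falsified exactly by the assignment (v_spl, ¬f(v_spl)). Then B is a solution to the PQE problem of taking C_{p+1} out of ∃X.F', i.e., ∃X.F' ≡ B ∧ ∃X.(F'\{C_{p+1}}). -/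

import Mathlib

/-- An assignment `a` satisfies a clause (a finite set of literals, each literal
being a variable paired with its polarity) iff some literal evaluates to true. -/
def satClause {ν : Type*} (a : ν → Bool) (c : Finset (ν × Bool)) : Prop :=
  ∃ l ∈ c, a l.1 = l.2

/-- An assignment satisfies a CNF formula iff it satisfies every clause. -/
def satCnf {ν : Type*} (a : ν → Bool) (F : Finset (Finset (ν × Bool))) : Prop :=
  ∀ c ∈ F, satClause a c

/-- clause splitting yields a single-test property: let `F`
specify a single-output combinational circuit `M` (internal variables `X`,
finitely many input variables `V`, output variable `w` modelled by `Unit`;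
circuit conditions (i) and (ii)) computing `f`.  Let `C ∈ F`, pick a literal
`l(vᵢ) = (vᵢ, pol vᵢ)` of each input variable, and let `F'` be `F` with `C`
replaced by the clauses `C ∨ ¬l(v₁), …, C ∨ ¬l(v_p)` and
`C_{p+1} = C ∨ l(v₁) ∨ … ∨ l(v_p)`.  Let `v_spl` be the unique input falsifying
every `l(vᵢ)` and `B` the clause over `V ∪ {w}` falsified exactly by
`(v_spl, ¬f(v_spl))`.  Then `B` is a solution to the PQE problem of taking
`C_{p+1}` out of `∃X.F'`. -/
theorem clause_splitting_single_test_property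
    {X V : Type*} [DecidableEq X] [DecidableEq V] [Fintype V]
    (F : Finset (Finset ((X ⊕ (V ⊕ Unit)) × Bool)))
    (f : (V → Bool) → Bool)
    -- circuit condition (i)
    (hi : ∀ v : V → Bool, ∃ (x : X → Bool) (b : Bool),
        satCnf (Sum.elim x (Sum.elim v fun _ => b)) F)
    -- circuit condition (ii)
    (hii : ∀ (x x' : X → Bool) (v : V → Bool) (b b' : Bool),
        satCnf (Sum.elim x (Sum.elim v fun _ => b)) F →
        satCnf (Sum.elim x' (Sum.elim v fun _ => b')) F → b = b')
    -- `f` computes the output of the circuit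
    (hf : ∀ v : V → Bool, ∃ x : X → Bool,
        satCnf (Sum.elim x (Sum.elim v fun _ => f v)) F)
    (C : Finset ((X ⊕ (V ⊕ Unit)) × Bool)) (hC : C ∈ F)
    (pol : V → Bool) :
    -- the clause `C_{p+1} = C ∨ l(v₁) ∨ … ∨ l(v_p)`
    let Cp1 : Finset ((X ⊕ (V ⊕ Unit)) × Bool) :=
      C ∪ Finset.univ.image fun u : V => ((Sum.inr (Sum.inl u), pol u))
    -- `F'`: `F` with `C` replaced by `C ∨ ¬l(v₁), …, C ∨ ¬l(v_p), C_{p+1}`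
    let F' : Finset (Finset ((X ⊕ (V ⊕ Unit)) × Bool)) :=
      ((F.erase C) ∪
        Finset.univ.image fun u : V =>
          insert ((Sum.inr (Sum.inl u) : X ⊕ (V ⊕ Unit)), !pol u) C) ∪ {Cp1}
    -- the input assignment falsifying every literal `l(vᵢ)`
    let vspl : V → Bool := fun u => !pol u
    -- the clause over `V ∪ {w}` falsified exactly by `(v_spl, ¬f(v_spl))`
    let B : Finset ((V ⊕ Unit) × Bool) :=
      (Finset.univ.image fun u : V => ((Sum.inl u : V ⊕ Unit), pol u)) ∪
        {(Sum.inr (), f vspl)}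
    ∀ (v : V → Bool) (b : Bool),
      (∃ x : X → Bool, satCnf (Sum.elim x (Sum.elim v fun _ => b)) F') ↔
      (satClause (Sum.elim v fun _ => b) B ∧
        ∃ x : X → Bool,
          satCnf (Sum.elim x (Sum.elim v fun _ => b)) (F'.erase Cp1)) := by
  intro Cp1 F' vspl B v b
  have mono : ∀ (a : (X ⊕ (V ⊕ Unit)) → Bool) (c c' : Finset ((X ⊕ (V ⊕ Unit)) × Bool)),
      c ⊆ c' → satClause a c → satClause a c' := by
    rintro a c c' h ⟨l, hl, he⟩; exact ⟨l, h hl, he⟩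
  constructor
  · rintro ⟨x, hx⟩
    have hCp1 : satClause (Sum.elim x (Sum.elim v fun _ => b)) Cp1 :=
      hx Cp1 (by simp [F'])
    have hF : satCnf (Sum.elim x (Sum.elim v fun _ => b)) F := by
      intro c hc
      by_cases hcC : c = C
      · rw [hcC]
        by_cases h : ∃ u, v u = pol u
        · obtain ⟨u, hu⟩ := h
          have h2 := hx (insert ((Sum.inr (Sum.inl u) : X ⊕ (V ⊕ Unit)), !pol u) C)
            (Finset.mem_union_left _ (Finset.mem_union_right _
              (Finset.mem_image.mpr ⟨u, Finset.mem_univ u, rfl⟩)))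
          obtain ⟨l, hl, he⟩ := h2
          rcases Finset.mem_insert.mp hl with rfl | hl
          · simp at he; rw [hu] at he; simp at he
          · exact ⟨l, hl, he⟩
        · obtain ⟨l, hl, he⟩ := hCp1
          rcases Finset.mem_union.mp hl with hl | hl
          · exact ⟨l, hl, he⟩
          · obtain ⟨u, -, rfl⟩ := Finset.mem_image.mp hl
            simp at he; exact absurd ⟨u, he⟩ h
      · exact hx c (Finset.mem_union_left _ (Finset.mem_union_left _
          (Finset.mem_erase.mpr ⟨hcC, hc⟩)))
    obtain ⟨x0, hx0⟩ := hf v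
    have hb : b = f v := hii x x0 v b (f v) hF hx0
    refine ⟨?_, x, fun c hc => hx c (Finset.erase_subset _ _ hc)⟩
    by_cases h : ∃ u, v u = pol u
    · obtain ⟨u, hu⟩ := h
      exact ⟨(Sum.inl u, pol u), by simp [B], by simpa using hu⟩
    · have hv : v = vspl := funext fun u => by
        have := not_exists.mp h u
        simp only [vspl]; cases hpu : pol u <;> cases hvu : v u <;> simp_all
      exact ⟨(Sum.inr (), f vspl), by simp [B], by simp [hb, hv]⟩
  · rintro ⟨hB, x, hx⟩
    by_cases h : ∃ u, v u = pol u
    · obtain ⟨u, hu⟩ := h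
      refine ⟨x, fun c hc => ?_⟩
      by_cases hcc : c = Cp1
      · subst hcc
        exact ⟨(Sum.inr (Sum.inl u), pol u),
          by simp [Cp1], by simpa using hu⟩
      · exact hx c (Finset.mem_erase.mpr ⟨hcc, hc⟩)
    · have hv : v = vspl := funext fun u => by
        have := not_exists.mp h u
        simp only [vspl]; cases hpu : pol u <;> cases hvu : v u <;> simp_all
      have hb : b = f vspl := by
        obtain ⟨l, hl, he⟩ := hB
        simp [B] at hl
        rcases hl with rfl | ⟨u, rfl⟩
        · simpa using he
        · exact absurd ⟨u, by simpa using he⟩ h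
      have hbfv : b = f v := by rw [hv, hb]
      obtain ⟨x0, hx0⟩ := hf v
      rw [← hbfv] at hx0
      refine ⟨x0, fun c hc => ?_⟩
      have hCsat : satClause (Sum.elim x0 (Sum.elim v fun _ => b)) C := hx0 C hC
      rcases Finset.mem_union.mp hc with hc | hc
      · rcases Finset.mem_union.mp hc with hc | hc
        · exact hx0 c (Finset.mem_of_mem_erase hc)
        · obtain ⟨u, -, rfl⟩ := Finset.mem_image.mp hc
          exact mono _ _ _ (Finset.subset_insert _ _) hCsat
      · rw [Finset.mem_singleton.mp hc]
        exact mono _ _ _ Finset.subset_union_left hCsat
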